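/- For every θ ∈ θ_p: 2^{N−1}·∏_{θ'∈θ_p, θ'≠θ} sin((θ−θ')/2) = (−1)^{N−1}·N·cos(Nθ/2); and for every θ ∈ θ_a: 2^{N−1}·∏_{θ'∈θ_a, θ'≠θ} sin((θ−θ')/2) = (−1)^{N−1}·N·sin(Nθ/2). -/

import Mathlib

open Finset
open Complex Polynomial Real

noncomputable section

/-- Antiperiodic momenta: θ_a = {(2j−1)π/N : j = 1,…,N}. -/
def thetaA (N : ℕ) (j : Fin N) : ℝ := (2 * (j : ℝ) + 1) * Real.pi / N

/-- Periodic momenta: θ_p = {2(j−1)π/N : j = 1,…,N}. -/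
def thetaP (N : ℕ) (j : Fin N) : ℝ := (2 * (j : ℝ)) * Real.pi / N

lemma pow_mod_eq {ζ : ℂ} {N : ℕ} (h : ζ ^ N = 1) (x : ℕ) : ζ ^ (x % N) = ζ ^ x := by
  conv_rhs => rw [← Nat.div_add_mod x N, pow_add, pow_mul, h, one_pow, one_mul]

lemma prod_one_sub (N : ℕ) [NeZero N] (hN : 0 < N) :
    ∏ m ∈ (univ.erase (0 : Fin N)), (1 - Complex.exp (2 * Real.pi * I / N) ^ (m : ℕ)) = N := by
  set ζ := Complex.exp (2 * Real.pi * I / N) with hζdef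
  have hζ : IsPrimitiveRoot ζ N := Complex.isPrimitiveRoot_exp N hN.ne'
  have hinj : Function.Injective (fun k : Fin N => ζ ^ (k : ℕ)) := by
    intro a b hab
    exact Fin.ext (hζ.pow_inj a.isLt b.isLt hab)
  have himg : Finset.image (fun k : Fin N => ζ ^ (k : ℕ)) univ = nthRootsFinset N (1 : ℂ) := by
    apply Finset.eq_of_subset_of_card_le
    · intro x hx
      simp only [Finset.mem_image] at hx
      obtain ⟨k, -, rfl⟩ := hx
      rw [Polynomial.mem_nthRootsFinset hN, ← pow_mul, mul_comm, pow_mul, hζ.pow_eq_one, one_pow]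
    · rw [hζ.card_nthRootsFinset, Finset.card_image_of_injective _ hinj, card_univ, Fintype.card_fin]
  have hprod : ∏ k : Fin N, (X - C (ζ ^ (k : ℕ))) = X ^ N - 1 := by
    rw [Polynomial.X_pow_sub_one_eq_prod hN hζ, ← himg,
      Finset.prod_image (fun a _ b _ h => hinj h)]
  have hsplit : (X - 1) * ∏ m ∈ univ.erase (0 : Fin N), (X - C (ζ ^ (m : ℕ)))
      = X ^ N - 1 := by
    rw [← hprod, ← Finset.mul_prod_erase univ _ (Finset.mem_univ (0 : Fin N)),
      Fin.val_zero, pow_zero, map_one]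
  have hQ : ∏ m ∈ univ.erase (0 : Fin N), (X - C (ζ ^ (m : ℕ)))
      = ∑ i ∈ range N, (X : ℂ[X]) ^ i := by
    have h2 : (X - 1 : ℂ[X]) * ∑ i ∈ range N, (X : ℂ[X]) ^ i = X ^ N - 1 := by
      rw [mul_comm, geom_sum_mul]
    have hX1 : (X - 1 : ℂ[X]) ≠ 0 := by
      simpa using Polynomial.X_sub_C_ne_zero (1 : ℂ)
    exact mul_left_cancel₀ hX1 (hsplit.trans h2.symm)
  have := congrArg (Polynomial.eval (1 : ℂ)) hQ
  rw [Polynomial.eval_prod] at this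
  simp only [Polynomial.eval_sub, Polynomial.eval_X, Polynomial.eval_C] at this
  simpa using this

lemma pow_fin_add {ζ : ℂ} {N : ℕ} [NeZero N] (h : ζ ^ N = 1) (a b : Fin N) :
    ζ ^ ((a + b : Fin N) : ℕ) = ζ ^ (a : ℕ) * ζ ^ (b : ℕ) := by
  rw [Fin.add_def]
  show ζ ^ (((a : ℕ) + b) % N) = _
  rw [pow_mod_eq h, pow_add]

lemma prod_diff (N : ℕ) [NeZero N] (hN : 0 < N) (j : Fin N) :
    ∏ k ∈ univ.erase j,
      (Complex.exp (2 * Real.pi * I / N) ^ (j : ℕ) - Complex.exp (2 * Real.pi * I / N) ^ (k : ℕ))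
      = N * Complex.exp (2 * Real.pi * I / N) ^ ((j : ℕ) * (N - 1)) := by
  set ζ := Complex.exp (2 * Real.pi * I / N) with hζdef
  have hζ : IsPrimitiveRoot ζ N := Complex.isPrimitiveRoot_exp N hN.ne'
  have h1 : ζ ^ N = 1 := hζ.pow_eq_one
  have hfac : ∀ k : Fin N, ζ ^ (j : ℕ) - ζ ^ (k : ℕ) = ζ ^ (j : ℕ) * (1 - ζ ^ ((k - j : Fin N) : ℕ)) := by
    intro k
    have : ζ ^ ((k - j + j : Fin N) : ℕ) = ζ ^ ((k - j : Fin N) : ℕ) * ζ ^ (j : ℕ) :=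
      pow_fin_add h1 _ _
    rw [sub_add_cancel] at this
    rw [mul_sub, mul_one, this]
    ring
  rw [Finset.prod_congr rfl (fun k _ => hfac k), Finset.prod_mul_distrib,
    Finset.prod_const, Finset.card_erase_of_mem (Finset.mem_univ j), card_univ,
    Fintype.card_fin, ← pow_mul]
  have hre : ∏ k ∈ univ.erase j, (1 - ζ ^ ((k - j : Fin N) : ℕ))
      = ∏ m ∈ univ.erase (0 : Fin N), (1 - ζ ^ (m : ℕ)) := by
    apply Finset.prod_nbij' (fun k => k - j) (fun m => m + j)
    · intro k hk
      simp only [Finset.mem_erase, Finset.mem_univ, and_true] at hk ⊢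
      exact fun h => hk (by simpa [sub_eq_zero] using h)
    · intro m hm
      simp only [Finset.mem_erase, Finset.mem_univ, and_true] at hm ⊢
      intro h
      apply hm
      have := congrArg (· - j) h
      simpa using this
    · intro k _; exact sub_add_cancel k j
    · intro m _; exact add_sub_cancel_right m j
    · intro k _; rfl
  rw [hre, prod_one_sub N hN, mul_comm]

lemma two_sin' (a b : ℂ) : 2 * Complex.sin (a - b) =
    -I * (Complex.exp (-(a + b) * I) * (Complex.exp (2 * a * I) - Complex.exp (2 * b * I))) := by
  rw [Complex.sin, mul_sub, ← Complex.exp_add, ← Complex.exp_add]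
  have e1 : -(a + b) * I + 2 * a * I = (a - b) * I := by ring
  have e2 : -(a + b) * I + 2 * b * I = -(a - b) * I := by ring
  rw [e1, e2]
  field_simp
  ring_nf

lemma key_prod (N : ℕ) [NeZero N] (hN : 1 ≤ N) (j : Fin N) :
    (2:ℝ) ^ (N-1) * ∏ k ∈ univ.erase j, Real.sin (π * ((j:ℝ) - (k:ℝ)) / N)
    = (-1:ℝ)^(N-1) * (-1)^(j:ℕ) * N := by
  have hN0 : 0 < N := hN
  have hNne : (N:ℝ) ≠ 0 := Nat.cast_ne_zero.2 hN0.ne'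
  set ζ := Complex.exp (2 * (π : ℝ) * I / N) with hζdef
  have hζ : IsPrimitiveRoot ζ N := Complex.isPrimitiveRoot_exp N hN0.ne'
  have h1 : ζ ^ N = 1 := hζ.pow_eq_one
  have hcard : (univ.erase j).card = N - 1 := by
    rw [Finset.card_erase_of_mem (Finset.mem_univ j), card_univ, Fintype.card_fin]
  -- the exponential form of each factor
  have hzk : ∀ k : Fin N, Complex.exp (2 * ((π:ℝ) * (k:ℝ) / N : ℝ) * I) = ζ ^ (k:ℕ) := by
    intro k
    rw [hζdef, ← Complex.exp_nat_mul]
    congr 1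
    push_cast
    ring
  have hfac : ∀ k : Fin N,
      (2:ℂ) * Complex.sin ((π:ℂ) * (((j:ℕ):ℂ) - ((k:ℕ):ℂ)) / (N:ℂ))
      = -I * (Complex.exp ((-(π * (j:ℝ) / N + π * (k:ℝ) / N) : ℝ) * I)
          * (ζ ^ (j:ℕ) - ζ ^ (k:ℕ))) := by
    intro k
    have harg : (π:ℂ) * (((j:ℕ):ℂ) - ((k:ℕ):ℂ)) / (N:ℂ)
        = ((π * (j:ℝ) / N : ℝ) : ℂ) - ((π * (k:ℝ) / N : ℝ) : ℂ) := by
      push_cast; ring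
    have hargsum : ((-(π * (j:ℝ) / N + π * (k:ℝ) / N) : ℝ) : ℂ)
        = -(((π * (j:ℝ) / N : ℝ) : ℂ) + ((π * (k:ℝ) / N : ℝ) : ℂ)) := by
      push_cast; ring
    rw [harg, hargsum, two_sin', ← hzk j, ← hzk k]
  -- main complexified computation
  apply Complex.ofReal_injective
  push_cast

  rw [show ((2:ℂ))^(N-1) = ∏ _k ∈ univ.erase j, (2:ℂ) by rw [Finset.prod_const, hcard],
    ← Finset.prod_mul_distrib]
  rw [Finset.prod_congr rfl (fun k _ => hfac k)]
  rw [Finset.prod_mul_distrib, Finset.prod_const, hcard, Finset.prod_mul_distrib]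
  rw [prod_diff N hN0 j]
  rw [← Complex.exp_sum]
  -- sums
  have hsum1 : ∑ k : Fin N, ((k:ℕ):ℝ) = (N:ℝ) * ((N:ℝ) - 1) / 2 := by
    rw [Fin.sum_univ_eq_sum_range (fun i => (i:ℝ)) N]
    have h2 := Finset.sum_range_id_mul_two N
    have h3 : ((∑ i ∈ range N, i : ℕ) : ℝ) * 2 = (N:ℝ) * ((N:ℝ) - 1) := by
      rw [← Nat.cast_ofNat, ← Nat.cast_mul, h2]
      push_cast [Nat.cast_sub hN]
      ring
    push_cast at h3 ⊢
    linarith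
  have hS : ∑ k ∈ univ.erase j, ((-(π * (j:ℝ) / N + π * (k:ℝ) / N) : ℝ) : ℂ) * I
      = ((-(2 * π * (j:ℝ) * ((N:ℝ)-1) / N - π * (j:ℝ) + π * ((N:ℝ)-1) / 2) : ℝ) : ℂ) * I := by
    rw [← Finset.sum_mul]
    congr 1
    rw [← Complex.ofReal_sum]
    congr 1
    rw [Finset.sum_erase_eq_sub (Finset.mem_univ j),
      Finset.sum_congr rfl (fun (k : Fin N) _ =>
        (by ring : -(π * (j:ℝ) / N + π * ((k:ℕ):ℝ) / N)
          = (-(π * (j:ℝ) / N)) + (-π/N) * ((k:ℕ):ℝ))),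
      Finset.sum_add_distrib, Finset.sum_const, ← Finset.mul_sum, hsum1, card_univ,
      Fintype.card_fin]
    field_simp
    ring_nf
    field_simp
    ring
  rw [hS]
  have hzj : ζ ^ ((j:ℕ) * (N-1))
      = Complex.exp (((2 * π * (j:ℝ) * ((N:ℝ)-1) / N : ℝ) : ℂ) * I) := by
    rw [hζdef, ← Complex.exp_nat_mul]
    congr 1
    push_cast [Nat.cast_sub hN]
    ring
  rw [hzj, ← mul_assoc, ← mul_assoc]
  have hexp2 : Complex.exp (((-(π/2) : ℝ) : ℂ) * I) = -I := by
    rw [Complex.exp_mul_I]; push_cast; simp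
  have hmain : Complex.exp (((-(2 * π * (j:ℝ) * ((N:ℝ)-1) / N - π * (j:ℝ)
        + π * ((N:ℝ)-1) / 2) : ℝ) : ℂ) * I)
      * Complex.exp (((2 * π * (j:ℝ) * ((N:ℝ)-1) / N : ℝ) : ℂ) * I)
      = (-1 : ℂ) ^ (j:ℕ) * (-I) ^ (N-1) := by
    rw [← Complex.exp_add,
      show (((-(2 * π * (j:ℝ) * ((N:ℝ)-1) / N - π * (j:ℝ) + π * ((N:ℝ)-1) / 2) : ℝ) : ℂ) * I
          + ((2 * π * (j:ℝ) * ((N:ℝ)-1) / N : ℝ) : ℂ) * I)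
        = ((j:ℕ) : ℂ) * (((π:ℝ) : ℂ) * I) + (((N-1 : ℕ)) : ℂ) * (((-(π/2) : ℝ) : ℂ) * I) from by
          push_cast [Nat.cast_sub hN]; ring,
      Complex.exp_add, Complex.exp_nat_mul, Complex.exp_nat_mul, Complex.exp_pi_mul_I, hexp2]
  have hII : ((-I : ℂ)) ^ (N-1) * (-I) ^ (N-1) = (-1 : ℂ) ^ (N-1) := by
    rw [← mul_pow]; norm_num [Complex.I_mul_I]
  linear_combination ((-I : ℂ)^(N-1) * (N:ℂ)) * hmain + ((-1 : ℂ)^(j:ℕ) * (N:ℂ)) * hII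

/-- Product formulas over the punctured momentum sets: for θ ∈ θ_p,
2^{N−1}·∏_{θ'∈θ_p, θ'≠θ} sin((θ−θ')/2) = (−1)^{N−1}·N·cos(Nθ/2), and for
θ ∈ θ_a, 2^{N−1}·∏_{θ'∈θ_a, θ'≠θ} sin((θ−θ')/2) = (−1)^{N−1}·N·sin(Nθ/2). -/
theorem punctured_momentum_product_formulas (N : ℕ) (hN : 1 ≤ N) :
    (∀ j : Fin N,
        2 ^ (N - 1) *
            ∏ k ∈ univ.erase j, Real.sin ((thetaP N j - thetaP N k) / 2) =
          (-1 : ℝ) ^ (N - 1) * N * Real.cos (N * thetaP N j / 2)) ∧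
      ∀ j : Fin N,
        2 ^ (N - 1) *
            ∏ k ∈ univ.erase j, Real.sin ((thetaA N j - thetaA N k) / 2) =
          (-1 : ℝ) ^ (N - 1) * N * Real.sin (N * thetaA N j / 2) := by
  have hN0 : 0 < N := hN
  haveI : NeZero N := ⟨hN0.ne'⟩
  have hNne : (N:ℝ) ≠ 0 := Nat.cast_ne_zero.2 hN0.ne'
  have hcos : ∀ j : Fin N, Real.cos (((j:ℕ):ℝ) * π) = (-1 : ℝ) ^ (j:ℕ) := by
    intro j
    have := Real.cos_nat_mul_pi_sub 0 (j:ℕ)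
    simpa using this
  constructor
  · intro j
    have harg : ∀ k : Fin N, (thetaP N j - thetaP N k) / 2 = π * ((j:ℝ) - (k:ℝ)) / N := by
      intro k
      unfold thetaP
      field_simp
    rw [Finset.prod_congr rfl (fun k _ => by rw [harg k]), key_prod N hN j]
    have h2 : (N:ℝ) * thetaP N j / 2 = ((j:ℕ):ℝ) * π := by
      unfold thetaP; field_simp
    rw [h2, hcos j]
    ring
  · intro j
    have harg : ∀ k : Fin N, (thetaA N j - thetaA N k) / 2 = π * ((j:ℝ) - (k:ℝ)) / N := by
      intro k
      unfold thetaA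
      field_simp
      ring
    rw [Finset.prod_congr rfl (fun k _ => by rw [harg k]), key_prod N hN j]
    have h2 : (N:ℝ) * thetaA N j / 2 = ((j:ℕ):ℝ) * π + π / 2 := by
      unfold thetaA; field_simp
    rw [h2, Real.sin_add_pi_div_two, hcos j]
    ring
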